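/- If a dataset D is ℓ-augmented linearly separable with radius R, then for the online structured perceptron algorithm run on D, the cumulative loss of its predictions satisfies Σ_{i=1}^{t} ℓ(y_i, ŷ_i) ≤ R² for every t ≤ n. -/

import Mathlib

open scoped RealInnerProductSpace

/-- **Structured Perceptron mistake bound (Theorem 1).**
If the dataset `(x i, y i)` (for `i < n`) is `ℓ`-augmented linearly separable by the
unit vector `wbar` with radius `R`, then the cumulative loss of the online structured
perceptron predictions satisfies `∑_{i<t} ℓ (y i) (yhat i) ≤ R²` for all `t ≤ n`. -/
theorem structured_perceptron_loss_bound
    {E X Y : Type*} [NormedAddCommGroup E] [InnerProductSpace ℝ E] [Fintype Y]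
    (n : ℕ) (x : ℕ → X) (y : ℕ → Y) (Φ : X → Y → E) (ℓ : Y → Y → ℝ)
    (R : ℝ) (hR : 0 < R) (wbar : E) (hwbar : ‖wbar‖ = 1)
    (hℓnonneg : ∀ a b : Y, 0 ≤ ℓ a b) (hℓdiag : ∀ a : Y, ℓ a a = 0)
    (hsepA : ∀ i < n, ∀ y' : Y, y' ≠ y i →
      ‖Φ (x i) (y i) - Φ (x i) y'‖ ^ 2 ≤ ℓ (y i) y' * R ^ 2)
    (hsepB : ∀ i < n, ∀ y' : Y, y' ≠ y i →
      ℓ (y i) y' ≤ ⟪wbar, Φ (x i) (y i) - Φ (x i) y'⟫)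
    -- the online structured perceptron run
    (w : ℕ → E) (yhat : ℕ → Y)
    (hw0 : w 0 = 0)
    (hargmax : ∀ i < n, ∀ y' : Y, ⟪w i, Φ (x i) y'⟫ ≤ ⟪w i, Φ (x i) (yhat i)⟫)
    (hupd : ∀ i < n, w (i + 1) = w i + Φ (x i) (y i) - Φ (x i) (yhat i))
    (t : ℕ) (ht : t ≤ n) :
    ∑ i ∈ Finset.range t, ℓ (y i) (yhat i) ≤ R ^ 2 := by
  set L : ℕ → ℝ := fun s => ∑ i ∈ Finset.range s, ℓ (y i) (yhat i) with hL
  have key : ∀ s, s ≤ n → L s ≤ ⟪wbar, w s⟫ ∧ ‖w s‖ ^ 2 ≤ R ^ 2 * L s := by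
    intro s hs
    induction s with
    | zero => simp [hL, hw0]
    | succ k ih =>
      have hk : k < n := hs
      obtain ⟨ih1, ih2⟩ := ih (le_of_lt hk)
      have hLs : L (k + 1) = L k + ℓ (y k) (yhat k) := Finset.sum_range_succ _ _
      by_cases h : yhat k = y k
      · have hw : w (k + 1) = w k := by rw [hupd k hk, h]; abel
        rw [hLs, hw, h, hℓdiag]
        constructor <;> linarith
      · have hB := hsepB k hk (yhat k) h
        have hA := hsepA k hk (yhat k) h
        have harg := hargmax k hk (y k)
        set d : E := Φ (x k) (y k) - Φ (x k) (yhat k) with hd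
        have hw : w (k + 1) = w k + d := by rw [hupd k hk, hd]; abel
        have hid : ⟪w k, d⟫ = ⟪w k, Φ (x k) (y k)⟫ - ⟪w k, Φ (x k) (yhat k)⟫ :=
          inner_sub_right _ _ _
        constructor
        · rw [hLs, hw, inner_add_right]
          linarith
        · rw [hLs, hw]
          have hnorm : ‖w k + d‖ ^ 2 = ‖w k‖ ^ 2 + 2 * ⟪w k, d⟫ + ‖d‖ ^ 2 :=
            norm_add_sq_real _ _
          nlinarith
  obtain ⟨h1, h2⟩ := key t ht
  have h3 : ⟪wbar, w t⟫ ≤ ‖w t‖ := by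
    calc ⟪wbar, w t⟫ ≤ ‖wbar‖ * ‖w t‖ := real_inner_le_norm _ _
    _ = ‖w t‖ := by rw [hwbar, one_mul]
  have hL0 : 0 ≤ L t := Finset.sum_nonneg fun i _ => hℓnonneg _ _
  have h4 : L t ≤ ‖w t‖ := le_trans h1 h3
  have h5 : L t ^ 2 ≤ R ^ 2 * L t := by nlinarith [norm_nonneg (w t)]
  show L t ≤ R ^ 2
  rcases eq_or_lt_of_le hL0 with heq | hlt
  · rw [← heq]; positivity
  · exact (mul_le_mul_iff_of_pos_right hlt).mp (by nlinarith : L t * L t ≤ R ^ 2 * L t)
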